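/- For every λ ∈ (−1,1) and every x ∈ ℝ, one has exp(iπ·F(x)) = τ_λ(exp(iπ·x)); that is, F is a lift of the circle map τ_λ under the projection p(x) = exp(iπx). -/

import Mathlib

open Complex

lemma exp_two_arctan (t : ℝ) :
    Complex.exp ((2 * Real.arctan t : ℝ) * Complex.I)
      = (1 + t * Complex.I) / (1 - t * Complex.I) := by
  have hr : (0:ℝ) < Real.sqrt (1 + t^2) := Real.sqrt_pos.mpr (by positivity)
  have hr2 : ((Real.sqrt (1 + t^2) : ℝ) : ℂ)^2 = 1 + (t:ℂ)^2 := by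
    rw [← Complex.ofReal_pow, Real.sq_sqrt (by positivity)]
    push_cast; ring
  have hrne : ((Real.sqrt (1 + t^2) : ℝ) : ℂ) ≠ 0 := by
    exact_mod_cast hr.ne'
  have hden : (1 : ℂ) - t * Complex.I ≠ 0 := by
    intro h
    have := congrArg Complex.re h
    simp at this
  have h1 : ((2 * Real.arctan t : ℝ) : ℂ) * Complex.I
      = (Real.arctan t : ℂ) * Complex.I + (Real.arctan t : ℂ) * Complex.I := by
    push_cast; ring
  rw [h1, Complex.exp_add, Complex.exp_mul_I, ← Complex.ofReal_cos, ← Complex.ofReal_sin,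
    Real.cos_arctan, Real.sin_arctan]
  rw [eq_div_iff hden]
  push_cast
  field_simp
  linear_combination (-(1 + (t:ℂ) * Complex.I)) * hr2
    + (-((t:ℂ)^2 + (t:ℂ)^3 * Complex.I)) * Complex.I_sq

/-- For λ ∈ (−1,1) the map F(x) = 2x + 1 + (2/π)·arctan(λ·sin(πx)/(1 − λ·cos(πx))) is a
lift of the circle map τ_λ(z) = z·(λ − z)/(1 − conj(λ)·z) under the projection
p(x) = exp(iπx): for all x ∈ ℝ one has exp(iπ·F(x)) = τ_λ(exp(iπx)). -/
theorem lift_of_circle_map (lam : ℝ) (hlam : lam ∈ Set.Ioo (-1 : ℝ) 1) (x : ℝ) :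
    Complex.exp ((Real.pi * (2 * x + 1 + (2 / Real.pi) *
        Real.arctan (lam * Real.sin (Real.pi * x) / (1 - lam * Real.cos (Real.pi * x)))) : ℝ)
        * Complex.I) =
      Complex.exp ((Real.pi * x : ℝ) * Complex.I) *
          ((lam : ℂ) - Complex.exp ((Real.pi * x : ℝ) * Complex.I)) /
        (1 - (starRingEnd ℂ) (lam : ℂ) * Complex.exp ((Real.pi * x : ℝ) * Complex.I)) := by
  obtain ⟨h1, h2⟩ := hlam
  set C := Real.cos (Real.pi * x) with hC
  set S := Real.sin (Real.pi * x) with hS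
  have hpyth : (S:ℂ)^2 + (C:ℂ)^2 = 1 := by
    have := Real.sin_sq_add_cos_sq (Real.pi * x)
    exact_mod_cast this
  have hc : 0 < 1 - lam * C := by
    have habs : |lam * C| < 1 := by
      rw [abs_mul]
      calc |lam| * |C| ≤ |lam| * 1 :=
            mul_le_mul_of_nonneg_left (by rw [hC]; exact Real.abs_cos_le_one _) (abs_nonneg _)
        _ = |lam| := mul_one _
        _ < 1 := abs_lt.mpr ⟨h1, h2⟩
    have := le_abs_self (lam * C)
    linarith
  set t := lam * S / (1 - lam * C) with ht
  have hcc : (1:ℂ) - (lam:ℂ) * (C:ℂ) ≠ 0 := by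
    have : ((1 - lam*C : ℝ):ℂ) ≠ 0 := Complex.ofReal_ne_zero.mpr hc.ne'
    push_cast at this; exact this
  have ht2 : (t:ℂ) * (1 - (lam:ℂ) * (C:ℂ)) = (lam:ℂ) * (S:ℂ) := by
    rw [ht]; push_cast; field_simp
  have hz : Complex.exp ((Real.pi * x : ℝ) * Complex.I) = (C:ℂ) + (S:ℂ) * Complex.I := by
    rw [Complex.exp_mul_I, ← Complex.ofReal_cos, ← Complex.ofReal_sin, hC, hS]
  have hsplit : ((Real.pi * (2 * x + 1 + (2 / Real.pi) * Real.arctan t) : ℝ) : ℂ) * Complex.I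
      = ((Real.pi * x : ℝ) : ℂ) * Complex.I + ((Real.pi * x : ℝ) : ℂ) * Complex.I
        + (Real.pi : ℂ) * Complex.I + ((2 * Real.arctan t : ℝ) : ℂ) * Complex.I := by
    have hπ : (Real.pi : ℂ) ≠ 0 := by exact_mod_cast Real.pi_ne_zero
    push_cast
    field_simp
    ring
  rw [hsplit, Complex.exp_add, Complex.exp_add, Complex.exp_add, Complex.exp_pi_mul_I,
    exp_two_arctan, hz, Complex.conj_ofReal]
  have hden1 : (1:ℂ) - (t:ℂ) * Complex.I ≠ 0 := by
    intro h
    have := congrArg Complex.re h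
    simp at this
  have hden2 : (1:ℂ) - (lam:ℂ) * ((C:ℂ) + (S:ℂ) * Complex.I) ≠ 0 := by
    intro h
    have := congrArg Complex.re h
    simp at this
    linarith
  clear_value t
  clear ht
  rw [mul_div_assoc', div_eq_div_iff hden1 hden2]
  linear_combination ((C:ℂ) + (S:ℂ) * Complex.I) * (((lam:ℂ) - Complex.I * t * lam) * hpyth
    + ((lam:ℂ) * S^2 + Complex.I * t * lam * S^2 + 2 * lam * C * S * t - 2 * S * t) * Complex.I_sq
    + (2 * (S:ℂ) - 2 * Complex.I * C) * ht2)
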